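/- The Shapley value satisfies strict desirability: if parties i ≠ j satisfy v(C ∪ {i}) ≥ v(C ∪ {j}) for all coalitions C ⊆ N \ {i,j}, with strict inequality for at least one such coalition B, then φ_i > φ_j. -/

import Mathlib

def preceding {n : ℕ} (σ : Equiv.Perm (Fin n)) (i : Fin n) : Finset (Fin n) :=
  Finset.univ.filter (fun j => σ j < σ i)

/-- The Shapley value of party `i`: the average over all permutations of the
marginal contribution of `i` to the coalition of parties preceding it. -/
noncomputable def shapley {n : ℕ} (v : Finset (Fin n) → ℝ) (i : Fin n) : ℝ :=
  (∑ σ : Equiv.Perm (Fin n), (v (insert i (preceding σ i)) - v (preceding σ i))) /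
    (Nat.factorial n)

lemma mem_preceding {n : ℕ} {σ : Equiv.Perm (Fin n)} {i k : Fin n} :
    k ∈ preceding σ i ↔ σ k < σ i := by simp [preceding]

lemma exists_preceding_eq {n : ℕ} (i : Fin n) (s : Finset (Fin n)) (hi : i ∉ s) :
    ∃ σ : Equiv.Perm (Fin n), preceding σ i = s := by
  classical
  set l : List (Fin n) := s.sort (· ≤ ·) ++ i :: ((sᶜ.erase i).sort (· ≤ ·)) with hl
  have hins : i ∉ s.sort (· ≤ ·) := by simpa using hi
  have hnd : l.Nodup := by
    refine List.Nodup.append (s.sort_nodup _) ?_ ?_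
    · refine List.nodup_cons.2 ⟨?_, (sᶜ.erase i).sort_nodup _⟩
      simp
    · intro a ha hb
      have has : a ∈ s := (Finset.mem_sort _).1 ha
      rcases List.mem_cons.1 hb with rfl | hb
      · exact hi has
      · have h' : a ∈ sᶜ.erase i := (Finset.mem_sort _).1 hb
        simp only [Finset.mem_erase, Finset.mem_compl] at h'
        exact h'.2 has
  have hmem : ∀ k : Fin n, k ∈ l := by
    intro k
    by_cases hk : k ∈ s
    · exact List.mem_append.2 (Or.inl ((Finset.mem_sort _).2 hk))
    · by_cases hki : k = i
      · subst hki; exact List.mem_append.2 (Or.inr (List.mem_cons_self))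
      · refine List.mem_append.2 (Or.inr (List.mem_cons.2 (Or.inr ?_)))
        exact (Finset.mem_sort _).2 (by simp [Finset.mem_erase, hki, hk])
  set e : Fin l.length ≃ Fin n := hnd.getEquivOfForallMemList l hmem with he
  have hlen : l.length = n := by simpa using Fintype.card_congr e
  refine ⟨(e.symm.trans (finCongr hlen)), ?_⟩
  have hidx : ∀ k : Fin n, ((e.symm.trans (finCongr hlen)) k : ℕ) = l.idxOf k := by
    intro k; rfl
  have hii : l.idxOf i = s.card := by
    rw [hl, List.idxOf_append_of_notMem hins, List.idxOf_cons_self]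
    simp
  ext k
  rw [mem_preceding, Fin.lt_def, hidx, hidx, hii]
  constructor
  · intro hk
    by_contra hks
    have : l.idxOf k = (s.sort (· ≤ ·)).length + List.idxOf k (i :: ((sᶜ.erase i).sort (· ≤ ·))) := by
      rw [hl, List.idxOf_append_of_notMem (by simpa using hks)]
    simp only [Finset.length_sort] at this
    omega
  · intro hk
    rw [hl, List.idxOf_append_of_mem ((Finset.mem_sort _).2 hk)]
    calc List.idxOf k (s.sort (· ≤ ·)) < (s.sort (· ≤ ·)).length :=
          List.idxOf_lt_length_iff.2 ((Finset.mem_sort _).2 hk)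
      _ = s.card := by simp


lemma swap_key {n : ℕ} (v : Finset (Fin n) → ℝ) (σ : Equiv.Perm (Fin n)) {i j : Fin n}
    (hij : i ≠ j) :
    (v (insert i (preceding σ i)) - v (preceding σ i)) -
      (v (insert j (preceding (σ * Equiv.swap i j) j)) -
        v (preceding (σ * Equiv.swap i j) j)) =
    v (insert i ((preceding σ i).erase j)) - v (insert j ((preceding σ i).erase j)) := by
  classical
  set C := (preceding σ i).erase j with hC
  have hiC : i ∉ C := by
    simp [hC, mem_preceding]
  have hjC : j ∉ C := Finset.notMem_erase _ _
  have hne : σ j ≠ σ i := fun h => hij.symm (σ.injective h)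
  by_cases h : σ j < σ i
  · have h1 : preceding σ i = insert j C := by
      rw [hC, Finset.insert_erase (mem_preceding.2 h)]
    have h2 : preceding (σ * Equiv.swap i j) j = insert i C := by
      ext k
      rw [mem_preceding]
      simp only [Equiv.Perm.mul_apply, Equiv.swap_apply_right]
      rcases eq_or_ne k i with rfl | hki
      · simp [Equiv.swap_apply_left, h]
      rcases eq_or_ne k j with rfl | hkj
      · simp [Equiv.swap_apply_right, Finset.mem_insert, hij.symm, hjC]
      · rw [Equiv.swap_apply_of_ne_of_ne hki hkj]
        simp [Finset.mem_insert, hki, hC, mem_preceding, hkj]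
    rw [h1, h2, Finset.insert_comm]
    ring
  · have h1 : preceding σ i = C := by
      rw [hC, Finset.erase_eq_of_notMem (by simp [mem_preceding, h])]
    have h2 : preceding (σ * Equiv.swap i j) j = C := by
      ext k
      rw [mem_preceding]
      simp only [Equiv.Perm.mul_apply, Equiv.swap_apply_right]
      rcases eq_or_ne k i with rfl | hki
      · simp [Equiv.swap_apply_left, h, hiC]
      rcases eq_or_ne k j with rfl | hkj
      · simp [Equiv.swap_apply_right, hjC]
      · rw [Equiv.swap_apply_of_ne_of_ne hki hkj]
        simp [hC, mem_preceding, hkj]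
    rw [h1, h2]
    ring


theorem shapley_strict_desirability {n : ℕ} (v : Finset (Fin n) → ℝ) (i j : Fin n)
    (hij : i ≠ j)
    (hge : ∀ C : Finset (Fin n), i ∉ C → j ∉ C → v (insert j C) ≤ v (insert i C))
    (hstrict : ∃ B : Finset (Fin n), i ∉ B ∧ j ∉ B ∧ v (insert j B) < v (insert i B)) :
    shapley v j < shapley v i := by
  classical
  have hjsum : ∑ σ : Equiv.Perm (Fin n), (v (insert j (preceding σ j)) - v (preceding σ j))
      = ∑ σ : Equiv.Perm (Fin n),
          (v (insert j (preceding (σ * Equiv.swap i j) j)) -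
            v (preceding (σ * Equiv.swap i j) j)) :=
    (Fintype.sum_equiv (Equiv.mulRight (Equiv.swap i j)) _ _ (fun σ => rfl)).symm
  have key : ∀ σ : Equiv.Perm (Fin n),
      (v (insert j (preceding (σ * Equiv.swap i j) j)) - v (preceding (σ * Equiv.swap i j) j))
      ≤ (v (insert i (preceding σ i)) - v (preceding σ i)) := by
    intro σ
    have h := swap_key v σ hij
    have hiC : i ∉ (preceding σ i).erase j := by simp [preceding]
    have hjC : j ∉ (preceding σ i).erase j := Finset.notMem_erase _ _
    have := hge _ hiC hjC
    linarith
  obtain ⟨B, hiB, hjB, hB⟩ := hstrict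
  obtain ⟨σ₀, hσ₀⟩ := exists_preceding_eq i B hiB
  have keystrict : (v (insert j (preceding (σ₀ * Equiv.swap i j) j)) -
        v (preceding (σ₀ * Equiv.swap i j) j))
      < (v (insert i (preceding σ₀ i)) - v (preceding σ₀ i)) := by
    have h := swap_key v σ₀ hij
    rw [hσ₀, Finset.erase_eq_of_notMem hjB] at h
    rw [hσ₀]
    linarith
  have hsum : ∑ σ : Equiv.Perm (Fin n),
        (v (insert j (preceding (σ * Equiv.swap i j) j)) - v (preceding (σ * Equiv.swap i j) j))
      < ∑ σ : Equiv.Perm (Fin n), (v (insert i (preceding σ i)) - v (preceding σ i)) := by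
    refine Finset.sum_lt_sum (fun σ _ => key σ) ⟨σ₀, Finset.mem_univ _, keystrict⟩
  rw [shapley, shapley, hjsum]
  have hfac : (0:ℝ) < (Nat.factorial n : ℝ) := by positivity
  exact div_lt_div_of_pos_right hsum hfac
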